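/- Let L₀ and L₁ be Lindblad generators on M_d(ℂ) and suppose the kernel of L₀ is one-dimensional, spanned by a density matrix ρ₀. Let G₀ be the time average of L₀, let L₀⁻¹ : ker G₀ → ker G₀ be the inverse of the restriction of L₀ to ker G₀, and set A = L₀⁻¹ ∘ (id − G₀) ∘ L₁. Then there exists ε₀ > 0 such that for all 0 < ε < ε₀: the series ρ(ε) = Σ_{n≥0} (−ε)ⁿ Aⁿ[ρ₀] converges, Tr(ρ(ε)) = 1, (L₀ + εL₁)[ρ(ε)] = 0, the kernel of L₀ + εL₁ is one-dimensional, and ρ(ε) is the unique stationary density matrix of L₀ + εL₁. -/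

import Mathlib

open Matrix Filter
open scoped ComplexOrder

attribute [local instance] Matrix.frobeniusNormedAddCommGroup Matrix.frobeniusNormedSpace

set_option maxHeartbeats 1000000
set_option synthInstance.maxHeartbeats 400000

variable {d : ℕ}

noncomputable instance instCLMNormedRing :
    NormedRing (Matrix (Fin d) (Fin d) ℂ →L[ℂ] Matrix (Fin d) (Fin d) ℂ) :=
  ContinuousLinearMap.toNormedRing
noncomputable instance instCLMNormedAlgebra :
    NormedAlgebra ℂ (Matrix (Fin d) (Fin d) ℂ →L[ℂ] Matrix (Fin d) (Fin d) ℂ) :=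
  ContinuousLinearMap.toNormedAlgebra
noncomputable instance instCLMNormedSpaceReal :
    NormedSpace ℝ (Matrix (Fin d) (Fin d) ℂ →L[ℂ] Matrix (Fin d) (Fin d) ℂ) :=
  ContinuousLinearMap.toNormedSpace
instance instCLMComplete :
    CompleteSpace (Matrix (Fin d) (Fin d) ℂ →L[ℂ] Matrix (Fin d) (Fin d) ℂ) := by
  exact FiniteDimensional.complete ℂ (Matrix (Fin d) (Fin d) ℂ →L[ℂ] Matrix (Fin d) (Fin d) ℂ)
noncomputable instance instCLMNormedAlgebraRat :
    NormedAlgebra ℚ (Matrix (Fin d) (Fin d) ℂ →L[ℂ] Matrix (Fin d) (Fin d) ℂ) :=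
  .restrictScalars ℚ ℂ _
instance instCLMTopRing :
    IsTopologicalRing (Matrix (Fin d) (Fin d) ℂ →L[ℂ] Matrix (Fin d) (Fin d) ℂ) := by
  exact @NonUnitalSeminormedRing.toIsTopologicalRing _
    (ContinuousLinearMap.toNormedRing (𝕜 := ℂ)).toNonUnitalNormedRing.toNonUnitalSeminormedRing
instance instCLMContSMulReal :
    ContinuousSMul ℝ (Matrix (Fin d) (Fin d) ℂ →L[ℂ] Matrix (Fin d) (Fin d) ℂ) := by
  exact @IsBoundedSMul.continuousSMul _ _ _ _ _ _ _ NormedSpace.toIsBoundedSMul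
instance instCLMContSMulComplex :
    ContinuousSMul ℂ (Matrix (Fin d) (Fin d) ℂ →L[ℂ] Matrix (Fin d) (Fin d) ℂ) := by
  exact @IsBoundedSMul.continuousSMul _ _ _ _ _ _ _ NormedSpace.toIsBoundedSMul
instance instCLMComplete' :
    @CompleteSpace (Matrix (Fin d) (Fin d) ℂ →L[ℂ] Matrix (Fin d) (Fin d) ℂ)
      (@PseudoMetricSpace.toUniformSpace _
        (@SeminormedRing.toPseudoMetricSpace _ (@NormedRing.toSeminormedRing _ instCLMNormedRing))) := by
  exact FiniteDimensional.complete ℂ (Matrix (Fin d) (Fin d) ℂ →L[ℂ] Matrix (Fin d) (Fin d) ℂ)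
instance instCLMScalarTower :
    IsScalarTower ℝ ℂ (Matrix (Fin d) (Fin d) ℂ →L[ℂ] Matrix (Fin d) (Fin d) ℂ) := by
  exact ContinuousLinearMap.isScalarTower
noncomputable instance instMatENormed : ENormedAddMonoid (Matrix (Fin d) (Fin d) ℂ) :=
  NormedAddGroup.toENormedAddMonoid

/-- The Lindblad generator built from `H` and Kraus operators `h`. -/
noncomputable def lindbladOf (H : Matrix (Fin d) (Fin d) ℂ) {n : ℕ}
    (h : Fin n → Matrix (Fin d) (Fin d) ℂ) :
    Matrix (Fin d) (Fin d) ℂ →ₗ[ℂ] Matrix (Fin d) (Fin d) ℂ :=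
  (-Complex.I) • (LinearMap.mulLeft ℂ H - LinearMap.mulRight ℂ H) +
    ∑ α, ((LinearMap.mulLeft ℂ (h α)).comp (LinearMap.mulRight ℂ (h α)ᴴ)
      - ((1 : ℂ)/2) • (LinearMap.mulLeft ℂ ((h α)ᴴ * h α) + LinearMap.mulRight ℂ ((h α)ᴴ * h α)))

/-- `L` is a Lindblad generator. -/
def IsLindblad (L : Matrix (Fin d) (Fin d) ℂ →ₗ[ℂ] Matrix (Fin d) (Fin d) ℂ) : Prop :=
  ∃ (H : Matrix (Fin d) (Fin d) ℂ) (n : ℕ) (h : Fin n → Matrix (Fin d) (Fin d) ℂ),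
    H.IsHermitian ∧ L = lindbladOf H h

/-- `exp (t L)` as a map on matrices. -/
noncomputable def expL (L : Matrix (Fin d) (Fin d) ℂ →ₗ[ℂ] Matrix (Fin d) (Fin d) ℂ) (t : ℝ) :
    Matrix (Fin d) (Fin d) ℂ →L[ℂ] Matrix (Fin d) (Fin d) ℂ :=
  haveI : IsTopologicalRing (Matrix (Fin d) (Fin d) ℂ →L[ℂ] Matrix (Fin d) (Fin d) ℂ) := by
    exact @NonUnitalSeminormedRing.toIsTopologicalRing _
      (ContinuousLinearMap.toNormedRing (𝕜 := ℂ)).toNonUnitalNormedRing.toNonUnitalSeminormedRing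
  NormedSpace.exp ((t : ℂ) • LinearMap.toContinuousLinearMap L)

/-- `G` is the time average (Cesàro mean) of the semigroup generated by `L`. -/
def IsTimeAverage (L G : Matrix (Fin d) (Fin d) ℂ →ₗ[ℂ] Matrix (Fin d) (Fin d) ℂ) : Prop :=
  ∀ X, Tendsto (fun T : ℝ => T⁻¹ • ∫ t in (0:ℝ)..T, expL L t X) atTop (nhds (G X))

section
variable (L G : Matrix (Fin d) (Fin d) ℂ →ₗ[ℂ] Matrix (Fin d) (Fin d) ℂ)

lemma expL_add (t s : ℝ) (X : Matrix (Fin d) (Fin d) ℂ) :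
    expL L (t + s) X = expL L t (expL L s X) := by
  have hc : Commute ((t:ℂ) • LinearMap.toContinuousLinearMap L)
      ((s:ℂ) • LinearMap.toContinuousLinearMap L) := by
    refine ContinuousLinearMap.ext fun x => ?_
    simp only [ContinuousLinearMap.mul_apply, ContinuousLinearMap.smul_apply, _root_.map_smul]
    rw [smul_comm]
  have h : expL L (t + s) = expL L t * expL L s := by
    have hts : ((t + s : ℝ) : ℂ) • LinearMap.toContinuousLinearMap L
        = (t:ℂ) • LinearMap.toContinuousLinearMap L + (s:ℂ) • LinearMap.toContinuousLinearMap L := by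
      push_cast
      module
    rw [expL, expL, expL, hts]
    exact NormedSpace.exp_add_of_commute hc
  rw [h]; rfl

lemma continuous_expL (X : Matrix (Fin d) (Fin d) ℂ) :
    Continuous fun t : ℝ => expL L t X :=
  have hc1 : Continuous fun t : ℝ => (t:ℂ) • LinearMap.toContinuousLinearMap L :=
    Complex.continuous_ofReal.smul continuous_const
  have hc : Continuous fun t : ℝ => expL L t :=
    (NormedSpace.exp_continuous).comp hc1
  (ContinuousLinearMap.apply ℂ (Matrix (Fin d) (Fin d) ℂ) X).continuous.comp hc

lemma hasDerivAt_expL (v : Matrix (Fin d) (Fin d) ℂ) :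
    HasDerivAt (fun s : ℝ => expL L s v) (L v) 0 := by
  set M := LinearMap.toContinuousLinearMap L with hM
  have h1 : HasDerivAt (fun u : ℂ => NormedSpace.exp (u • M))
      (NormedSpace.exp ((0:ℂ) • M) * M) 0 := hasDerivAt_exp_smul_const M 0
  have hz : NormedSpace.exp ((0:ℂ) • M) = 1 := by
    rw [show (0:ℂ) • M = 0 by module, NormedSpace.exp_zero]
  have h1' : HasDerivAt (fun u : ℂ => NormedSpace.exp (u • M)) M ((0:ℝ):ℂ) := by
    rw [hz, one_mul] at h1
    simpa using h1
  have h2 : HasDerivAt (fun s : ℝ => NormedSpace.exp ((s:ℂ) • M)) M 0 := by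
    have hof : HasDerivAt (fun y : ℝ => (y:ℂ)) 1 0 := by
      simpa using (hasDerivAt_id (0:ℝ)).ofReal_comp
    have := @HasDerivAt.scomp ℝ _ _ _ _ (0:ℝ) ℂ _ _ _
      (by exact ContinuousLinearMap.isScalarTower) (fun y : ℝ => (y:ℂ)) _ _ _ h1' hof
    exact this.congr_deriv (by exact one_smul ℂ M)
  have h3 := ((ContinuousLinearMap.apply ℂ (Matrix (Fin d) (Fin d) ℂ)
      v).restrictScalars ℝ).hasFDerivAt.comp_hasDerivAt _ h2
  exact h3

lemma expL_fixed {v : Matrix (Fin d) (Fin d) ℂ} (hv : L v = 0) (t : ℝ) :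
    expL L t v = v := by
  set M := (t:ℂ) • LinearMap.toContinuousLinearMap L with hM
  have hMv : M v = 0 := by simp [hM, hv]
  have hexp : expL L t v = (ContinuousLinearMap.apply ℂ (Matrix (Fin d) (Fin d) ℂ) v)
      (NormedSpace.exp M) := rfl
  rw [hexp, NormedSpace.exp_eq_tsum (𝕂 := ℂ)]
  refine (ContinuousLinearMap.map_tsum (ContinuousLinearMap.apply ℂ (Matrix (Fin d) (Fin d) ℂ) v)
    (NormedSpace.expSeries_summable' (𝕂 := ℂ) M)).trans ?_
  change ∑' n : ℕ, ((n.factorial : ℂ))⁻¹ • (M ^ n) v = v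
  rw [tsum_eq_single 0 ?_]
  · simp
  · intro n hn
    obtain ⟨k, rfl⟩ := Nat.exists_eq_succ_of_ne_zero hn
    rw [pow_succ, ContinuousLinearMap.mul_apply, hMv, map_zero, smul_zero]

lemma timeAvg_shift (hG : IsTimeAverage L G) (s : ℝ) (X : Matrix (Fin d) (Fin d) ℂ) :
    Tendsto (fun T : ℝ => T⁻¹ • ∫ t in (0:ℝ)..T, expL L (t+s) X) atTop (nhds (G X)) := by
  have hint : ∀ a b : ℝ, IntervalIntegrable (fun t => expL L t X) MeasureTheory.volume a b :=
    fun a b => (continuous_expL L X).intervalIntegrable a b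
  have key : ∀ T : ℝ, (∫ t in (0:ℝ)..T, expL L (t+s) X)
      = (∫ t in (0:ℝ)..(T+s), expL L t X) - (∫ t in (0:ℝ)..s, expL L t X) := by
    intro T
    rw [intervalIntegral.integral_comp_add_right (fun t => expL L t X) s, zero_add,
      ← intervalIntegral.integral_interval_sub_left (hint 0 (T+s)) (hint 0 s)]
  have h1 : Tendsto (fun T : ℝ => (T+s)⁻¹ • ∫ t in (0:ℝ)..(T+s), expL L t X)
      atTop (nhds (G X)) :=
    (hG X).comp (tendsto_atTop_add_const_right atTop s tendsto_id)
  have h2 : Tendsto (fun T : ℝ => (T⁻¹*(T+s))) atTop (nhds 1) := by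
    have heq : (fun T : ℝ => T⁻¹*(T+s)) =ᶠ[atTop] fun T => 1 + s*T⁻¹ := by
      filter_upwards [eventually_ne_atTop (0:ℝ)] with T hT
      field_simp
    have : Tendsto (fun T : ℝ => 1 + s*T⁻¹) atTop (nhds (1 + s*0)) :=
      tendsto_const_nhds.add (tendsto_const_nhds.mul tendsto_inv_atTop_zero)
    simpa using this.congr' heq.symm
  have h3 : Tendsto (fun T : ℝ => T⁻¹ • (∫ t in (0:ℝ)..s, expL L t X)) atTop
      (nhds (0 : Matrix (Fin d) (Fin d) ℂ)) := by
    have h : Tendsto (fun T : ℝ => T⁻¹ • (∫ t in (0:ℝ)..s, expL L t X)) atTop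
        (nhds ((0:ℝ) • (∫ t in (0:ℝ)..s, expL L t X))) :=
      tendsto_inv_atTop_zero.smul_const _
    rwa [show (0:ℝ) • (∫ t in (0:ℝ)..s, expL L t X) = 0 from by module] at h
  have h4 := (h2.smul h1).sub h3
  rw [one_smul, sub_zero] at h4
  refine h4.congr' ?_
  filter_upwards [eventually_gt_atTop (|s|+1)] with T hT
  have hT0 : T ≠ 0 := by
    have := abs_nonneg s; nlinarith [abs_nonneg s]
  have hTs : T + s ≠ 0 := by
    have := neg_abs_le s; nlinarith
  rw [key T, smul_sub, smul_smul, mul_assoc, mul_inv_cancel₀ hTs, mul_one]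

lemma G_expL (hG : IsTimeAverage L G) (s : ℝ) (X : Matrix (Fin d) (Fin d) ℂ) :
    G (expL L s X) = G X := by
  refine tendsto_nhds_unique (hG (expL L s X)) ?_
  refine (timeAvg_shift L G hG s X).congr fun T => ?_
  congr 1
  refine intervalIntegral.integral_congr fun t _ => ?_
  rw [← expL_add L t s X]

lemma expL_G (hG : IsTimeAverage L G) (s : ℝ) (X : Matrix (Fin d) (Fin d) ℂ) :
    expL L s (G X) = G X := by
  have hint : ∀ a b : ℝ, IntervalIntegrable (fun t => expL L t X) MeasureTheory.volume a b :=
    fun a b => (continuous_expL L X).intervalIntegrable a b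
  have h0 := ((expL L s).continuous.tendsto (G X)).comp (hG X)
  refine tendsto_nhds_unique ?_ (timeAvg_shift L G hG s X)
  refine h0.congr fun T => ?_
  show expL L s (T⁻¹ • ∫ t in (0:ℝ)..T, expL L t X) = _
  rw [(expL L s).map_smul_of_tower]
  rw [show expL L s (∫ t in (0:ℝ)..T, expL L t X) = ∫ t in (0:ℝ)..T, expL L s (expL L t X) from
    (ContinuousLinearMap.intervalIntegral_comp_comm _ (hint 0 T)).symm]
  congr 1
  refine intervalIntegral.integral_congr fun t _ => ?_
  rw [← expL_add L s t X, add_comm s t]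

lemma L_G_eq_zero (hG : IsTimeAverage L G) (X : Matrix (Fin d) (Fin d) ℂ) :
    L (G X) = 0 := by
  have hconst : (fun s : ℝ => expL L s (G X)) = fun _ => G X :=
    funext fun s => expL_G L G hG s X
  have hd := hasDerivAt_expL L (G X)
  rw [hconst] at hd
  exact hd.unique (hasDerivAt_const _ _)

lemma G_L_eq_zero (hG : IsTimeAverage L G) (X : Matrix (Fin d) (Fin d) ℂ) :
    G (L X) = 0 := by
  have hd := (((LinearMap.toContinuousLinearMap G).restrictScalars
      ℝ).hasFDerivAt.comp_hasDerivAt _ (hasDerivAt_expL L X))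
  have hconst : (fun s : ℝ => (LinearMap.toContinuousLinearMap G) (expL L s X))
      = fun _ => G X := by
    funext s
    simpa using G_expL L G hG s X
  have hd' : HasDerivAt (fun s : ℝ => G (expL L s X)) (G (L X)) 0 := by
    exact hd
  rw [show (fun s : ℝ => G (expL L s X)) = fun _ => G X from
    funext fun s => G_expL L G hG s X] at hd'
  exact hd'.unique (hasDerivAt_const _ _)

lemma G_idem (hG : IsTimeAverage L G) {v : Matrix (Fin d) (Fin d) ℂ}
    (hfix : ∀ t : ℝ, expL L t v = v) : G v = v := by
  refine tendsto_nhds_unique (hG v) ?_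
  have heq : (fun _ : ℝ => v) =ᶠ[atTop] fun T : ℝ => T⁻¹ • ∫ t in (0:ℝ)..T, expL L t v := by
    filter_upwards [eventually_ne_atTop (0:ℝ)] with T hT
    rw [intervalIntegral.integral_congr (g := fun _ => v) fun t _ => hfix t,
      intervalIntegral.integral_const, sub_zero, smul_smul, inv_mul_cancel₀ hT, one_smul]
  exact tendsto_const_nhds.congr' heq
end

theorem trace_lindblad {L : Matrix (Fin d) (Fin d) ℂ →ₗ[ℂ] Matrix (Fin d) (Fin d) ℂ}
    (hL : IsLindblad L) (X : Matrix (Fin d) (Fin d) ℂ) : (L X).trace = 0 := by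
  obtain ⟨H, n, h, -, rfl⟩ := hL
  simp only [lindbladOf, LinearMap.add_apply, LinearMap.smul_apply, LinearMap.sub_apply,
    LinearMap.sum_apply, LinearMap.mulLeft_apply, LinearMap.mulRight_apply, LinearMap.comp_apply,
    Matrix.trace_add, Matrix.trace_sub, Matrix.trace_smul, Matrix.trace_sum, smul_add, smul_sub]
  rw [Matrix.trace_mul_comm H X]
  have key : ∀ α : Fin n, (h α * (X * (h α)ᴴ)).trace = (X * ((h α)ᴴ * h α)).trace := by
    intro α
    rw [Matrix.trace_mul_comm (h α) (X * (h α)ᴴ), mul_assoc]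
  have key2 : ∀ α : Fin n, ((h α)ᴴ * h α * X).trace = (X * ((h α)ᴴ * h α)).trace := by
    intro α
    rw [Matrix.trace_mul_comm]
  have : ∀ α ∈ Finset.univ, ((h α * (X * (h α)ᴴ)).trace -
      (((1:ℂ)/2) • (((h α)ᴴ * h α * X).trace) + ((1:ℂ)/2) • ((X * ((h α)ᴴ * h α)).trace))) = 0 := by
    intro α _
    rw [key α, key2 α]; simp only [smul_eq_mul]; ring
  rw [Finset.sum_eq_zero this]
  simp

theorem stmt10 (d : ℕ) (hd : 1 ≤ d)
    (L₀ L₁ G₀ : Matrix (Fin d) (Fin d) ℂ →ₗ[ℂ] Matrix (Fin d) (Fin d) ℂ)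
    (hL₀ : IsLindblad L₀) (hL₁ : IsLindblad L₁) (hG₀ : IsTimeAverage L₀ G₀)
    (ρ₀ : Matrix (Fin d) (Fin d) ℂ) (hρ₀ : ρ₀.PosSemidef) (hρ₀tr : ρ₀.trace = 1)
    (hker : LinearMap.ker L₀ = Submodule.span ℂ {ρ₀})
    -- `B` is the inverse of the restriction of `L₀` to `ker G₀`
    (B : Matrix (Fin d) (Fin d) ℂ →ₗ[ℂ] Matrix (Fin d) (Fin d) ℂ)
    (hB : ∀ X ∈ LinearMap.ker G₀,
      B X ∈ LinearMap.ker G₀ ∧ L₀ (B X) = X ∧ B (L₀ X) = X) :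
    -- with `A = L₀⁻¹ ∘ (id − G₀) ∘ L₁`:
    ∀ A : Matrix (Fin d) (Fin d) ℂ →ₗ[ℂ] Matrix (Fin d) (Fin d) ℂ,
      A = B ∘ₗ (LinearMap.id - G₀) ∘ₗ L₁ →
    ∃ ε₀ : ℝ, 0 < ε₀ ∧ ∀ ε : ℝ, 0 < ε → ε < ε₀ →
      Summable (fun n : ℕ => ((-ε : ℂ)) ^ n • (A ^ n) ρ₀) ∧
      (∑' n : ℕ, ((-ε : ℂ)) ^ n • (A ^ n) ρ₀).trace = 1 ∧
      (L₀ + (ε : ℂ) • L₁) (∑' n : ℕ, ((-ε : ℂ)) ^ n • (A ^ n) ρ₀) = 0 ∧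
      Module.finrank ℂ (LinearMap.ker (L₀ + (ε : ℂ) • L₁)) = 1 ∧
      ∀ σ : Matrix (Fin d) (Fin d) ℂ, σ.PosSemidef → σ.trace = 1 →
        (L₀ + (ε : ℂ) • L₁) σ = 0 → σ = ∑' n : ℕ, ((-ε : ℂ)) ^ n • (A ^ n) ρ₀ := by
  intro A hA
  classical
  have htr0 : ∀ X, (L₀ X).trace = 0 := fun X => trace_lindblad hL₀ X
  have htr1 : ∀ X, (L₁ X).trace = 0 := fun X => trace_lindblad hL₁ X
  have hL₀ρ₀ : L₀ ρ₀ = 0 := by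
    have : ρ₀ ∈ LinearMap.ker L₀ := hker ▸ Submodule.mem_span_singleton_self ρ₀
    exact this
  have hρ₀ne : ρ₀ ≠ 0 := by
    intro h; rw [h] at hρ₀tr; simp at hρ₀tr
  have hLG : ∀ X, L₀ (G₀ X) = 0 := L_G_eq_zero L₀ G₀ hG₀
  have hGL : ∀ X, G₀ (L₀ X) = 0 := G_L_eq_zero L₀ G₀ hG₀
  have hGρ : G₀ ρ₀ = ρ₀ := G_idem L₀ G₀ hG₀ (expL_fixed L₀ hL₀ρ₀)
  have hGG : ∀ X, G₀ (G₀ X) = G₀ X := fun X =>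
    G_idem L₀ G₀ hG₀ (fun t => expL_G L₀ G₀ hG₀ t X)
  have hfinM : Module.finrank ℂ (Matrix (Fin d) (Fin d) ℂ) = d * d := by
    rw [Module.finrank_matrix]
    simp
  have hrkG : LinearMap.range G₀ = Submodule.span ℂ {ρ₀} := by
    apply le_antisymm
    · rintro _ ⟨Y, rfl⟩; rw [← hker]; exact hLG Y
    · rw [Submodule.span_le, Set.singleton_subset_iff]; exact ⟨ρ₀, hGρ⟩
  have hfk1 : Module.finrank ℂ (LinearMap.ker L₀) = 1 := by
    rw [hker]; exact finrank_span_singleton hρ₀ne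
  have hfr1 : Module.finrank ℂ (LinearMap.range G₀) = 1 := by
    rw [hrkG]; exact finrank_span_singleton hρ₀ne
  have e1 := LinearMap.finrank_range_add_finrank_ker L₀
  have e2 := LinearMap.finrank_range_add_finrank_ker G₀
  rw [hfinM] at e1 e2
  have hrange : LinearMap.range L₀ = LinearMap.ker G₀ := by
    have hle : LinearMap.range L₀ ≤ LinearMap.ker G₀ := by
      rintro _ ⟨Y, rfl⟩; exact hGL Y
    exact Submodule.eq_of_le_of_finrank_eq hle (by omega)
  have hGeq : ∀ X : Matrix (Fin d) (Fin d) ℂ, G₀ X = X.trace • ρ₀ := by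
    intro X
    have hmem : G₀ X ∈ Submodule.span ℂ {ρ₀} := by rw [← hker]; exact hLG X
    obtain ⟨c, hc⟩ := Submodule.mem_span_singleton.mp hmem
    have hsub : X - G₀ X ∈ LinearMap.ker G₀ := by
      simp [LinearMap.mem_ker, map_sub, hGG]
    rw [← hrange] at hsub
    obtain ⟨Y, hY⟩ := hsub
    have htrY : (X - G₀ X).trace = 0 := by rw [← hY]; exact htr0 Y
    have htrG : (G₀ X).trace = X.trace := by
      rw [Matrix.trace_sub] at htrY
      linear_combination -htrY
    rw [← hc] at htrG ⊢
    rw [Matrix.trace_smul, hρ₀tr, smul_eq_mul, mul_one] at htrG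
    rw [htrG]
  have hkerG_tr : ∀ X ∈ LinearMap.ker G₀, X.trace = 0 := by
    intro X hX
    have : X.trace • ρ₀ = 0 := by rw [← hGeq]; exact hX
    rcases smul_eq_zero.mp this with h | h
    · exact h
    · exact absurd h hρ₀ne
  have hGL₁ : ∀ Y, G₀ (L₁ Y) = 0 := by
    intro Y; rw [hGeq, htr1, zero_smul]
  -- A facts
  have hAform : ∀ X, A X = B (L₁ X - G₀ (L₁ X)) := by
    intro X; simp [hA, LinearMap.comp_apply, LinearMap.sub_apply]
  have hmemA : ∀ X, L₁ X - G₀ (L₁ X) ∈ LinearMap.ker G₀ := by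
    intro X; simp [LinearMap.mem_ker, map_sub, hGG]
  have hAker : ∀ X, A X ∈ LinearMap.ker G₀ := by
    intro X; rw [hAform]; exact (hB _ (hmemA X)).1
  have hL₀A : ∀ X, L₀ (A X) = L₁ X := by
    intro X
    rw [hAform]
    rw [(hB _ (hmemA X)).2.1, hGL₁, sub_zero]
  -- norms
  set Ac := LinearMap.toContinuousLinearMap A with hAc
  set Bc := LinearMap.toContinuousLinearMap B with hBc
  set L₁c := LinearMap.toContinuousLinearMap L₁ with hL₁c
  have hAn : ∀ X, ‖A X‖ ≤ ‖Ac‖ * ‖X‖ := fun X => Ac.le_opNorm X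
  have hBn : ∀ X, ‖B X‖ ≤ ‖Bc‖ * ‖X‖ := fun X => Bc.le_opNorm X
  have hL₁n : ∀ X, ‖L₁ X‖ ≤ ‖L₁c‖ * ‖X‖ := fun X => L₁c.le_opNorm X
  refine ⟨min ((‖Ac‖+1)⁻¹) (((‖Bc‖+1) * (‖L₁c‖+1))⁻¹), ?_, ?_⟩
  · apply lt_min
    · positivity
    · positivity
  intro ε hε0 hε1
  have hεA : ε * ‖Ac‖ < 1 := by
    have h1 : ε < (‖Ac‖+1)⁻¹ := lt_of_lt_of_le hε1 (min_le_left _ _)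
    have h2 : (0:ℝ) < ‖Ac‖ + 1 := by positivity
    rw [inv_eq_one_div] at h1
    have h3 := (lt_div_iff₀ h2).mp h1
    nlinarith
  have hεBL : ε * (‖Bc‖ * ‖L₁c‖) < 1 := by
    have h1 : ε < ((‖Bc‖+1) * (‖L₁c‖+1))⁻¹ := lt_of_lt_of_le hε1 (min_le_right _ _)
    have h2 : (0:ℝ) < (‖Bc‖+1) * (‖L₁c‖+1) := by positivity
    rw [inv_eq_one_div] at h1
    have h3 := (lt_div_iff₀ h2).mp h1
    nlinarith [norm_nonneg Bc, norm_nonneg L₁c]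
  -- summability
  have hpow : ∀ (n : ℕ) (x : Matrix (Fin d) (Fin d) ℂ), ‖(A ^ n) x‖ ≤ ‖Ac‖ ^ n * ‖x‖ := by
    intro n
    induction n with
    | zero => intro x; simp
    | succ k ih =>
      intro x
      rw [pow_succ, Module.End.mul_apply]
      calc ‖(A ^ k) (A x)‖ ≤ ‖Ac‖ ^ k * ‖A x‖ := ih (A x)
        _ ≤ ‖Ac‖ ^ k * (‖Ac‖ * ‖x‖) := by
            apply mul_le_mul_of_nonneg_left (hAn x) (by positivity)
        _ = ‖Ac‖ ^ (k+1) * ‖x‖ := by ring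
  set f : ℕ → Matrix (Fin d) (Fin d) ℂ := fun n => ((-ε : ℂ)) ^ n • (A ^ n) ρ₀ with hf
  have hnormf : ∀ n, ‖f n‖ ≤ ‖ρ₀‖ * (ε * ‖Ac‖) ^ n := by
    intro n
    rw [hf]
    simp only [norm_smul, norm_pow]
    have hne : ‖(-ε : ℂ)‖ = ε := by
      rw [norm_neg, Complex.norm_real, Real.norm_eq_abs, abs_of_pos hε0]
    rw [hne]
    calc ε ^ n * ‖(A ^ n) ρ₀‖ ≤ ε ^ n * (‖Ac‖ ^ n * ‖ρ₀‖) := by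
          apply mul_le_mul_of_nonneg_left (hpow n ρ₀) (by positivity)
      _ = ‖ρ₀‖ * (ε * ‖Ac‖) ^ n := by rw [mul_pow]; ring
  have hsum : Summable f := by
    apply Summable.of_norm_bounded ?_ hnormf
    exact (summable_geometric_of_lt_one (by positivity) hεA).mul_left ‖ρ₀‖
  set S : Matrix (Fin d) (Fin d) ℂ := ∑' n, f n with hS
  -- trace of S
  set trc : Matrix (Fin d) (Fin d) ℂ →L[ℂ] ℂ :=
    LinearMap.toContinuousLinearMap (Matrix.traceLinearMap (Fin d) ℂ ℂ) with htrc
  have htrc_apply : ∀ X : Matrix (Fin d) (Fin d) ℂ, trc X = X.trace := fun X => rfl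
  have hAnker : ∀ n : ℕ, ((A ^ (n+1)) ρ₀) ∈ LinearMap.ker G₀ := by
    intro n
    rw [pow_succ', Module.End.mul_apply]
    exact hAker _
  have htrf : ∀ n : ℕ, n ≠ 0 → (f n).trace = 0 := by
    intro n hn
    obtain ⟨k, rfl⟩ := Nat.exists_eq_succ_of_ne_zero hn
    rw [hf]
    simp only [Matrix.trace_smul]
    rw [hkerG_tr _ (hAnker k), smul_zero]
  have htrS : S.trace = 1 := by
    have : S.trace = trc S := rfl
    rw [this, hS, trc.map_tsum hsum]
    rw [tsum_eq_single 0 (fun n hn => by rw [htrc_apply, htrf n hn])]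
    rw [htrc_apply, hf]
    simp [hρ₀tr]
  -- stationarity
  have hcont : ∀ (T : Matrix (Fin d) (Fin d) ℂ →ₗ[ℂ] Matrix (Fin d) (Fin d) ℂ),
      (LinearMap.toContinuousLinearMap T : Matrix (Fin d) (Fin d) ℂ → Matrix (Fin d) (Fin d) ℂ) = T :=
    fun T => rfl
  have hmap : ∀ (T : Matrix (Fin d) (Fin d) ℂ →ₗ[ℂ] Matrix (Fin d) (Fin d) ℂ),
      T S = ∑' n, T (f n) := by
    intro T
    have := (LinearMap.toContinuousLinearMap T).map_tsum (σ := RingHom.id ℂ) hsum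
    rw [hcont T] at this
    exact this
  have hsumT : ∀ (T : Matrix (Fin d) (Fin d) ℂ →ₗ[ℂ] Matrix (Fin d) (Fin d) ℂ),
      Summable (fun n => T (f n)) := by
    intro T
    have := hsum.map (LinearMap.toContinuousLinearMap T).toLinearMap.toAddMonoidHom
      (LinearMap.toContinuousLinearMap T).continuous
    exact this
  have hL₀f : ∀ n : ℕ, L₀ (f (n+1)) = ((-ε:ℂ)) ^ (n+1) • L₁ ((A ^ n) ρ₀) := by
    intro n
    rw [hf]
    simp only [_root_.map_smul]
    congr 1
    rw [pow_succ', Module.End.mul_apply, hL₀A]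
  have hL₁f : ∀ n : ℕ, L₁ (f n) = ((-ε:ℂ)) ^ n • L₁ ((A ^ n) ρ₀) := by
    intro n; rw [hf]; simp only [_root_.map_smul]
  have hstat : (L₀ + (ε : ℂ) • L₁) S = 0 := by
    have hL₀S : L₀ S = ∑' n, L₀ (f n) := hmap L₀
    have hL₁S : L₁ S = ∑' n, L₁ (f n) := hmap L₁
    have hshift : (∑' n, L₀ (f n)) = ∑' n, L₀ (f (n+1)) := by
      rw [Summable.tsum_eq_zero_add (hsumT L₀)]
      have h0 : L₀ (f 0) = 0 := by
        rw [hf]; simp [hL₀ρ₀]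
      rw [h0, zero_add]
    have hsum2 : Summable (fun n => ((-ε:ℂ)) ^ n • L₁ ((A ^ n) ρ₀)) := by
      have := hsumT L₁
      simp only [hL₁f] at this
      exact this
    have hL₀S' : L₀ S = (-ε:ℂ) • L₁ S := by
      rw [hL₀S, hshift]
      calc (∑' n, L₀ (f (n+1)))
          = ∑' n, (-ε:ℂ) • (((-ε:ℂ)) ^ n • L₁ ((A ^ n) ρ₀)) := by
            apply tsum_congr
            intro n
            rw [hL₀f n, pow_succ', smul_smul]
        _ = (-ε:ℂ) • ∑' n, ((-ε:ℂ)) ^ n • L₁ ((A ^ n) ρ₀) := Summable.tsum_const_smul _ hsum2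
        _ = (-ε:ℂ) • L₁ S := by rw [hL₁S]; exact congrArg _ (tsum_congr fun n => (hL₁f n).symm)
    rw [LinearMap.add_apply, LinearMap.smul_apply, hL₀S']
    module
  -- kernel dimension
  set Lε := L₀ + (ε : ℂ) • L₁ with hLε
  have hker1 : ∀ X ∈ LinearMap.ker G₀, Lε X = 0 → X = 0 := by
    intro X hX hLX
    have hBX : B (L₀ X) = X := (hB X hX).2.2
    have hL₀X : L₀ X = -((ε:ℂ) • L₁ X) := by
      have : L₀ X + (ε:ℂ) • L₁ X = 0 := by
        have := hLX
        rw [hLε, LinearMap.add_apply, LinearMap.smul_apply] at this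
        exact this
      exact eq_neg_of_add_eq_zero_left this
    have h1 : ‖X‖ ≤ ‖Bc‖ * ‖L₀ X‖ := by
      conv_lhs => rw [← hBX]
      exact hBn _
    have h2 : ‖L₀ X‖ = ε * ‖L₁ X‖ := by
      rw [hL₀X, norm_neg, norm_smul, Complex.norm_real, Real.norm_eq_abs, abs_of_pos hε0]
    have h3 : ‖L₁ X‖ ≤ ‖L₁c‖ * ‖X‖ := hL₁n X
    have h4 : ‖X‖ ≤ ε * (‖Bc‖ * ‖L₁c‖) * ‖X‖ := by
      rw [h2] at h1
      nlinarith [mul_le_mul_of_nonneg_left h3 (mul_nonneg (norm_nonneg Bc) hε0.le),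
        norm_nonneg X, norm_nonneg Bc, hε0.le]
    have h5 : ‖X‖ = 0 := by nlinarith [norm_nonneg X]
    exact norm_eq_zero.mp h5
  have hdisj : LinearMap.ker Lε ⊓ LinearMap.ker G₀ = ⊥ := by
    rw [Submodule.eq_bot_iff]
    rintro X ⟨hX1, hX2⟩
    exact hker1 X hX2 hX1
  have hfinle : Module.finrank ℂ (LinearMap.ker Lε) ≤ 1 := by
    have hsup := Submodule.finrank_sup_add_finrank_inf_eq
      (LinearMap.ker Lε) (LinearMap.ker G₀)
    rw [hdisj, finrank_bot, add_zero] at hsup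
    have hle := Submodule.finrank_le (LinearMap.ker Lε ⊔ LinearMap.ker G₀)
    rw [hfinM] at hle
    have hdd : 1 ≤ d * d := Nat.one_le_iff_ne_zero.mpr (by positivity)
    omega
  have hSker : S ∈ LinearMap.ker Lε := hstat
  have hSne : S ≠ 0 := by
    intro h
    rw [h] at htrS
    simp at htrS
  have hspanle : Submodule.span ℂ {S} ≤ LinearMap.ker Lε := by
    rw [Submodule.span_le, Set.singleton_subset_iff]; exact hSker
  have hfin : Module.finrank ℂ (LinearMap.ker Lε) = 1 := by
    refine le_antisymm hfinle ?_
    have := Submodule.finrank_mono hspanle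
    rw [finrank_span_singleton hSne] at this
    exact this
  have hkerspan : LinearMap.ker Lε = Submodule.span ℂ {S} :=
    (Submodule.eq_of_le_of_finrank_eq hspanle
      (by rw [finrank_span_singleton hSne, hfin])).symm
  refine ⟨hsum, htrS, hstat, hfin, ?_⟩
  intro σ hσpsd hσtr hσ
  have hσmem : σ ∈ Submodule.span ℂ {S} := by
    rw [← hkerspan]; exact hσ
  obtain ⟨c, hc⟩ := Submodule.mem_span_singleton.mp hσmem
  have : c • S.trace = (1:ℂ) := by
    rw [← Matrix.trace_smul, hc, hσtr]
  rw [htrS, smul_eq_mul, mul_one] at this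
  rw [← hc, this, one_smul]
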